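/- Let [p^n](z) = α_n β^{p^n−1} z^{p^n} + ⋯ ∈ O[[z^{p^n}]] be the multiplication-by-p^n series on a height-1 formal group over a characteristic-p complete discrete valuation ring O, where α_n = α^{(p^n−1)/(p−1)}. Then its compositional inverse is [p^n]^{-1}(z) = (1/β)(β/α_n)^{1/p^n} z^{1/p^n} + ⋯ ∈ O^{1/p^n}[[z^{1/p^n}]], and ([p^n]^{-1}(z))^{p^n} ∈ O[[z]]. -/

import Mathlib

open PowerSeries

/-- Composition `f ∘ g` of power series (substituting `g`, assumed to have zero constant
term, into `f`). -/
noncomputable def pscomp {R : Type*} [CommRing R] (f g : PowerSeries R) : PowerSeries R :=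
  PowerSeries.mk fun n =>
    PowerSeries.coeff n (Polynomial.eval₂ (PowerSeries.C) g (PowerSeries.trunc (n + 1) f))

namespace PscompAux

variable {R : Type*} [CommRing R]

lemma coeff_pow_mul_of_lt (g : PowerSeries R) (hg : constantCoeff g = 0) :
    ∀ (m : ℕ) (h : PowerSeries R) (k : ℕ), k < m → coeff k (g ^ m * h) = 0 := by
  intro m
  induction m with
  | zero => omega
  | succ m ih =>
    intro h k hk
    have : g ^ (m+1) * h = g * (g ^ m * h) := by ring
    rw [this, coeff_mul]
    apply Finset.sum_eq_zero
    rintro ⟨a, b⟩ hab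
    rw [Finset.HasAntidiagonal.mem_antidiagonal] at hab
    rcases Nat.eq_zero_or_pos a with ha | ha
    · subst ha
      simp [coeff_zero_eq_constantCoeff, hg]
    · rw [ih h b (by omega), mul_zero]

lemma coeff_pow_of_lt (g : PowerSeries R) (hg : constantCoeff g = 0)
    {m k : ℕ} (hk : k < m) : coeff k (g ^ m) = 0 := by
  have := coeff_pow_mul_of_lt g hg m 1 k hk
  rwa [mul_one] at this

lemma coeff_eval₂ (g : PowerSeries R) (hg : constantCoeff g = 0) (P : Polynomial R) (k : ℕ) :
    coeff k (Polynomial.eval₂ C g P) =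
      ∑ i ∈ Finset.range (k + 1), P.coeff i * coeff k (g ^ i) := by
  rw [Polynomial.eval₂_eq_sum, Polynomial.sum, map_sum]
  have h1 : ∀ i ∈ P.support, coeff k (C (P.coeff i) * g ^ i)
      = P.coeff i * coeff k (g ^ i) := by intro i _; simp
  rw [Finset.sum_congr rfl h1]
  calc ∑ i ∈ P.support, P.coeff i * coeff k (g ^ i)
      = ∑ i ∈ P.support ∪ Finset.range (k+1), P.coeff i * coeff k (g ^ i) :=
        Finset.sum_subset Finset.subset_union_left
          (fun x _ hx => by rw [Polynomial.notMem_support_iff.mp hx, zero_mul])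
    _ = ∑ i ∈ Finset.range (k+1), P.coeff i * coeff k (g ^ i) :=
        (Finset.sum_subset Finset.subset_union_right
          (fun x _ hx => by rw [coeff_pow_of_lt g hg (by simpa using hx), mul_zero])).symm

lemma coeff_pscomp (f g : PowerSeries R) (hg : constantCoeff g = 0) (k : ℕ) :
    coeff k (pscomp f g) = ∑ i ∈ Finset.range (k + 1), coeff i f * coeff k (g ^ i) := by
  rw [pscomp, coeff_mk, coeff_eval₂ g hg]
  refine Finset.sum_congr rfl fun i hi => ?_
  rw [coeff_trunc, if_pos (Finset.mem_range.mp hi)]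

lemma coeff_pscomp_trunc (f g : PowerSeries R) (hg : constantCoeff g = 0) {k N : ℕ}
    (h : k < N) : coeff k (pscomp f g) = coeff k (Polynomial.eval₂ C g (trunc N f)) := by
  rw [coeff_pscomp f g hg, coeff_eval₂ g hg]
  refine Finset.sum_congr rfl fun i hi => ?_
  rw [coeff_trunc, if_pos (by have := Finset.mem_range.mp hi; omega)]

lemma constantCoeff_pscomp (f g : PowerSeries R) (hg : constantCoeff g = 0) :
    constantCoeff (pscomp f g) = constantCoeff f := by
  have := coeff_pscomp f g hg 0
  simpa using this

lemma pscomp_one (g : PowerSeries R) (hg : constantCoeff g = 0) : pscomp 1 g = 1 := by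
  ext k
  rw [coeff_pscomp _ g hg]
  rcases Nat.eq_zero_or_pos k with rfl | hk
  · simp
  · rw [Finset.sum_eq_zero, coeff_one, if_neg (by omega)]
    intro i hi
    rcases Nat.eq_zero_or_pos i with rfl | hi2
    · simp [coeff_one, hk.ne']
    · rw [coeff_one, if_neg (by omega), zero_mul]

lemma pscomp_mul (f f' g : PowerSeries R) (hg : constantCoeff g = 0) :
    pscomp (f * f') g = pscomp f g * pscomp f' g := by
  ext k
  rw [coeff_pscomp_trunc (f * f') g hg (Nat.lt_succ_self k)]
  have key : coeff k (Polynomial.eval₂ C g (trunc (k+1) (f * f')))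
      = coeff k (Polynomial.eval₂ C g (trunc (k+1) f * trunc (k+1) f')) := by
    rw [coeff_eval₂ g hg, coeff_eval₂ g hg]
    refine Finset.sum_congr rfl fun i hi => ?_
    have hik : i < k + 1 := Finset.mem_range.mp hi
    congr 1
    rw [coeff_trunc, if_pos hik, PowerSeries.coeff_mul, Polynomial.coeff_mul]
    refine Finset.sum_congr rfl fun ab hab => ?_
    have := Finset.HasAntidiagonal.mem_antidiagonal.mp hab
    rw [coeff_trunc, if_pos (by omega), coeff_trunc, if_pos (by omega)]
  rw [key, Polynomial.eval₂_mul, PowerSeries.coeff_mul, PowerSeries.coeff_mul]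
  refine Finset.sum_congr rfl fun ab hab => ?_
  have := Finset.HasAntidiagonal.mem_antidiagonal.mp hab
  rw [← coeff_pscomp_trunc f g hg (by omega), ← coeff_pscomp_trunc f' g hg (by omega)]

lemma pscomp_pow (f g : PowerSeries R) (hg : constantCoeff g = 0) (i : ℕ) :
    pscomp (f ^ i) g = pscomp f g ^ i := by
  induction i with
  | zero => simpa using pscomp_one g hg
  | succ i ih => rw [pow_succ, pow_succ, pscomp_mul _ _ g hg, ih]

lemma pscomp_X_left (g : PowerSeries R) (hg : constantCoeff g = 0) : pscomp X g = g := by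
  ext k
  rw [coeff_pscomp _ g hg]
  rcases Nat.eq_zero_or_pos k with rfl | hk
  · simpa using hg.symm
  · rw [Finset.sum_eq_single 1]
    · simp
    · intro i hi hi1
      rw [coeff_X, if_neg hi1, zero_mul]
    · intro h
      exact absurd (Finset.mem_range.mpr (by omega)) h

lemma pscomp_X_right (f : PowerSeries R) : pscomp f X = f := by
  ext k
  rw [coeff_pscomp f X constantCoeff_X k]
  rw [Finset.sum_eq_single k]
  · simp
  · intro i hi hik
    rw [coeff_X_pow, if_neg (fun h => hik h.symm), mul_zero]
  · intro h
    exact absurd (Finset.mem_range.mpr (by omega)) h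

lemma pscomp_assoc (A B C : PowerSeries R) (hB : constantCoeff B = 0)
    (hC : constantCoeff C = 0) :
    pscomp (pscomp A B) C = pscomp A (pscomp B C) := by
  have hBC : constantCoeff (pscomp B C) = 0 := by
    rw [constantCoeff_pscomp B C hC]; exact hB
  ext n
  rw [coeff_pscomp _ C hC, coeff_pscomp _ _ hBC]
  have hrhs : ∀ i, coeff n ((pscomp B C) ^ i)
      = ∑ k ∈ Finset.range (n+1), coeff k (B ^ i) * coeff n (C ^ k) := by
    intro i
    rw [← pscomp_pow B C hC, coeff_pscomp _ C hC]
  calc ∑ k ∈ Finset.range (n + 1), coeff k (pscomp A B) * coeff n (C ^ k)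
      = ∑ k ∈ Finset.range (n + 1), ∑ i ∈ Finset.range (n + 1),
          coeff i A * coeff k (B ^ i) * coeff n (C ^ k) := by
        refine Finset.sum_congr rfl fun k hk => ?_
        rw [coeff_pscomp A B hB, Finset.sum_mul]
        refine Finset.sum_subset (Finset.range_subset_range.mpr (by
          have := Finset.mem_range.mp hk; omega)) fun i _ hi => ?_
        rw [coeff_pow_of_lt B hB (by simpa using hi), mul_zero, zero_mul]
    _ = ∑ i ∈ Finset.range (n + 1), coeff i A * coeff n ((pscomp B C) ^ i) := by
        rw [Finset.sum_comm]
        refine Finset.sum_congr rfl fun i _ => ?_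
        rw [hrhs i, Finset.mul_sum]
        refine Finset.sum_congr rfl fun k _ => by ring

end PscompAux


section
variable {R : Type*} [CommRing R]

lemma coeff_pow_congr (g g' : PowerSeries R) (m : ℕ)
    (h : ∀ k ≤ m, coeff k g = coeff k g') :
    ∀ (i : ℕ), ∀ k ≤ m, coeff k (g ^ i) = coeff k (g' ^ i) := by
  intro i
  induction i with
  | zero => intro k _; rfl
  | succ i ih =>
    intro k hk
    rw [pow_succ, pow_succ, coeff_mul, coeff_mul]
    refine Finset.sum_congr rfl fun ab hab => ?_
    have := Finset.HasAntidiagonal.mem_antidiagonal.mp hab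
    rw [ih ab.1 (by omega), h ab.2 (by omega)]

lemma coeff_pow_congr_lt (g g' : PowerSeries R) (hg : constantCoeff g = 0)
    (hg' : constantCoeff g' = 0) (m : ℕ)
    (h : ∀ k < m, coeff k g = coeff k g') {i : ℕ} (hi : 2 ≤ i) :
    coeff m (g ^ i) = coeff m (g' ^ i) := by
  obtain ⟨j, rfl⟩ : ∃ j, i = j + 1 := ⟨i - 1, by omega⟩
  have hj : 1 ≤ j := by omega
  rw [pow_succ, pow_succ, coeff_mul, coeff_mul]
  refine Finset.sum_congr rfl fun ab hab => ?_
  have hsum := Finset.HasAntidiagonal.mem_antidiagonal.mp hab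
  rcases Nat.eq_zero_or_pos ab.2 with h2 | h2
  · rw [h2, coeff_zero_eq_constantCoeff, hg, hg', mul_zero, mul_zero]
  rcases Nat.eq_zero_or_pos ab.1 with h1 | h1
  · rw [h1, coeff_zero_eq_constantCoeff, map_pow, map_pow, hg, hg',
      zero_pow (by omega), zero_mul, zero_mul]
  rw [coeff_pow_congr g g' (m-1) (fun k hk => h k (by omega)) j ab.1 (by omega),
    h ab.2 (by omega)]

noncomputable def invCoeff (F : PowerSeries R) (v : R) : ℕ → R
  | 0 => 0
  | 1 => v
  | (m+2) => -v * ∑ i ∈ Finset.Icc 2 (m+2), PowerSeries.coeff i F *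
      PowerSeries.coeff (m+2)
        ((PowerSeries.mk fun k => if _h : k < m + 2 then invCoeff F v k else 0) ^ i)
  termination_by m => m
  decreasing_by exact _h

lemma exists_right_inverse (F : PowerSeries R) (u : Rˣ) (h0 : constantCoeff F = 0)
    (h1 : coeff 1 F = u) :
    ∃ G, constantCoeff G = 0 ∧ coeff 1 G = ↑u⁻¹ ∧ pscomp F G = X := by
  set v : R := ↑u⁻¹ with hv
  set G : PowerSeries R := mk (invCoeff F v) with hGdef
  have hG0 : constantCoeff G = 0 := by
    rw [← coeff_zero_eq_constantCoeff, hGdef, coeff_mk, invCoeff]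
  have hG1 : coeff 1 G = v := by rw [hGdef, coeff_mk, invCoeff]
  refine ⟨G, hG0, hG1, ?_⟩
  ext m
  rw [PscompAux.coeff_pscomp F G hG0]
  match m with
  | 0 => simp [h0]
  | 1 =>
    rw [Finset.sum_range_succ, Finset.sum_range_one]
    rw [h1, pow_one, hG1, coeff_X, if_pos rfl]
    simp [coeff_one, hv]
  | (m+2) =>
    rw [coeff_X, if_neg (by omega)]
    have hsplit : Finset.range (m+2+1) = insert 0 (insert 1 (Finset.Icc 2 (m+2))) := by
      ext x
      simp only [Finset.mem_range, Finset.mem_insert, Finset.mem_Icc]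
      omega
    rw [hsplit, Finset.sum_insert (by simp), Finset.sum_insert (by simp)]
    rw [coeff_zero_eq_constantCoeff, h0, zero_mul, zero_add, h1, pow_one]
    set Gt : PowerSeries R := mk fun k => if _h : k < m + 2 then invCoeff F v k else 0
      with hGt
    have hGt0 : constantCoeff Gt = 0 := by
      rw [← coeff_zero_eq_constantCoeff, hGt, coeff_mk, dif_pos (by omega), invCoeff]
    have hagree : ∀ k < m + 2, coeff k G = coeff k Gt := by
      intro k hk
      rw [hGdef, hGt, coeff_mk, coeff_mk, dif_pos hk]
    have hGm : coeff (m+2) G = -v * ∑ i ∈ Finset.Icc 2 (m+2), coeff i F *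
        coeff (m+2) (Gt ^ i) := by
      rw [hGdef, coeff_mk, invCoeff]
    have hsum : ∑ i ∈ Finset.Icc 2 (m+2), coeff i F * coeff (m+2) (G ^ i)
        = ∑ i ∈ Finset.Icc 2 (m+2), coeff i F * coeff (m+2) (Gt ^ i) := by
      refine Finset.sum_congr rfl fun i hi => ?_
      rw [coeff_pow_congr_lt G Gt hG0 hGt0 (m+2) hagree (Finset.mem_Icc.mp hi).1]
    rw [hsum, hGm]
    have huv : (u : R) * v = 1 := by rw [hv]; exact u.mul_inv
    set S := ∑ i ∈ Finset.Icc 2 (m+2), coeff i F * coeff (m+2) (Gt ^ i)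
    calc (u : R) * (-v * S) + S = -(((u:R) * v) * S) + S := by ring
      _ = 0 := by rw [huv, one_mul, neg_add_cancel]

lemma exists_inverse (F : PowerSeries R) (u : Rˣ) (h0 : constantCoeff F = 0)
    (h1 : coeff 1 F = u) :
    ∃ G, constantCoeff G = 0 ∧ coeff 1 G = ↑u⁻¹ ∧ pscomp F G = X ∧ pscomp G F = X := by
  obtain ⟨G, hG0, hG1, hFG⟩ := exists_right_inverse F u h0 h1
  obtain ⟨H, hH0, hH1, hGH⟩ := exists_right_inverse G u⁻¹ hG0 hG1
  have hFH : F = H := by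
    calc F = pscomp F X := (PscompAux.pscomp_X_right F).symm
      _ = pscomp F (pscomp G H) := by rw [hGH]
      _ = pscomp (pscomp F G) H := (PscompAux.pscomp_assoc F G H hG0 hH0).symm
      _ = pscomp X H := by rw [hFG]
      _ = H := PscompAux.pscomp_X_left H hH0
  exact ⟨G, hG0, hG1, hFG, by rw [hFH]; exact hGH⟩
end


section MuSupport
variable {R : Type*} [CommRing R]

lemma coeff_mul_not_dvd (q : ℕ) (A B : PowerSeries R)
    (hA : ∀ k, ¬ q ∣ k → coeff k A = 0) (hB : ∀ k, ¬ q ∣ k → coeff k B = 0)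
    {k : ℕ} (hk : ¬ q ∣ k) : coeff k (A * B) = 0 := by
  rw [coeff_mul]
  apply Finset.sum_eq_zero
  rintro ⟨a, b⟩ hab
  have hsum := Finset.HasAntidiagonal.mem_antidiagonal.mp hab
  by_cases ha : q ∣ a
  · have hb : ¬ q ∣ b := fun hb => hk (hsum ▸ Nat.dvd_add ha hb)
    rw [hB b hb, mul_zero]
  · rw [hA a ha, zero_mul]

lemma coeff_mul_dvd (q : ℕ) (hq : 0 < q) (A B : PowerSeries R)
    (hA : ∀ k, ¬ q ∣ k → coeff k A = 0) (j : ℕ) :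
    coeff (q * j) (A * B) =
      ∑ a ∈ Finset.range (j + 1), coeff (q * a) A * coeff (q * (j - a)) B := by
  rw [coeff_mul, Finset.Nat.sum_antidiagonal_eq_sum_range_succ_mk]
  have himg : ∑ a ∈ Finset.range (j+1), coeff (q * a) A * coeff (q * j - q * a) B
      = ∑ x ∈ (Finset.range (j+1)).image (q * ·), coeff x A * coeff (q * j - x) B := by
    rw [Finset.sum_image (fun a _ b _ h => by
      exact Nat.eq_of_mul_eq_mul_left hq h)]
  have hsub : (Finset.range (j+1)).image (q * ·) ⊆ Finset.range (q * j + 1) := by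
    intro x hx
    obtain ⟨a, ha, rfl⟩ := Finset.mem_image.mp hx
    have := Finset.mem_range.mp ha
    exact Finset.mem_range.mpr (by
      have : q * a ≤ q * j := Nat.mul_le_mul_left q (by omega); omega)
  have hvan : ∀ x ∈ Finset.range (q * j + 1), x ∉ (Finset.range (j+1)).image (q * ·) →
      coeff x A * coeff (q * j - x) B = 0 := by
    intro x hx hx2
    have hnd : ¬ q ∣ x := by
      rintro ⟨a, rfl⟩
      have hxr := Finset.mem_range.mp hx
      have haj : a ≤ j := by
        by_contra hcon
        have h1 : q * (j + 1) ≤ q * a := Nat.mul_le_mul_left q (by omega)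
        have h2 : q * (j+1) = q * j + q := by ring
        omega
      exact hx2 (Finset.mem_image.mpr ⟨a, Finset.mem_range.mpr (by omega), rfl⟩)
    rw [hA x hnd, zero_mul]
  have step : ∑ k ∈ Finset.range (q * j + 1), coeff k A * coeff (q * j - k) B
      = ∑ a ∈ Finset.range (j+1), coeff (q * a) A * coeff (q * j - q * a) B := by
    rw [himg]
    exact (Finset.sum_subset hsub hvan).symm
  dsimp only
  rw [Nat.succ_eq_add_one, step]
  refine Finset.sum_congr rfl fun a _ => by rw [Nat.mul_sub q j a]

lemma pow_support (q : ℕ) (hq : 0 < q) (μ F : PowerSeries R)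
    (hμ : ∀ k, ¬ q ∣ k → coeff k μ = 0)
    (hrel : ∀ j, coeff (q * j) μ = coeff j F) (i : ℕ) :
    (∀ k, ¬ q ∣ k → coeff k (μ ^ i) = 0) ∧
      (∀ j, coeff (q * j) (μ ^ i) = coeff j (F ^ i)) := by
  induction i with
  | zero =>
    constructor
    · intro k hk
      rw [pow_zero, coeff_one, if_neg (fun h => hk (by rw [h]; exact dvd_zero q))]
    · intro j
      rw [pow_zero, pow_zero, coeff_one, coeff_one]
      by_cases hj : j = 0
      · rw [if_pos (by rw [hj, mul_zero]), if_pos hj]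
      · rw [if_neg (Nat.mul_ne_zero hq.ne' hj), if_neg hj]
  | succ i ih =>
    constructor
    · intro k hk
      rw [pow_succ]
      exact coeff_mul_not_dvd q (μ ^ i) μ ih.1 hμ hk
    · intro j
      rw [pow_succ, pow_succ, coeff_mul_dvd q hq (μ ^ i) μ ih.1 j,
        PowerSeries.coeff_mul, Finset.Nat.sum_antidiagonal_eq_sum_range_succ_mk]
      refine Finset.sum_congr rfl fun a _ => ?_
      rw [ih.2 a, hrel (j - a)]

end MuSupport

/-- Let `[pⁿ](z) = αₙ β^{pⁿ-1} z^{pⁿ} + ⋯ ∈ O[[z^{pⁿ}]]` (here the series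
`μ`) be the multiplication-by-`pⁿ` series on a height-one formal group over a complete
discrete valuation ring `O` of characteristic `p > 2`, where `αₙ = α^{(pⁿ-1)/(p-1)}` and
`α, β ∈ O^×`.  Then its compositional inverse `[pⁿ]⁻¹(z) = (1/β)(β/αₙ)^{1/pⁿ} z^{1/pⁿ} + ⋯`
exists in `O^{1/pⁿ}[[z^{1/pⁿ}]]`, and `([pⁿ]⁻¹(z))^{pⁿ} ∈ O[[z]]`.  In characteristic `p`
the fractional-power series `[pⁿ]⁻¹` is faithfully encoded by its `pⁿ`-th power
`G = ([pⁿ]⁻¹)^{pⁿ} = Σ bᵢ^{pⁿ} zⁱ`, which has coefficients in `O` (this is the last claim);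
writing `μ = F(z^{pⁿ})`, the inverse property `μ([pⁿ]⁻¹(z)) = z` reads `F ∘ G = z`, the
property `[pⁿ]⁻¹(μ(z)) = z` reads `G ∘ μ = z^{pⁿ}`, and the leading coefficient
`b₁ = (1/β)(β/αₙ)^{1/pⁿ}` reads `(coeff 1 G)·(αₙ β^{pⁿ-1}) = b₁^{pⁿ}·(αₙ β^{pⁿ-1}) = 1`. -/
theorem inverse_of_mul_p_pow_n {p : ℕ} (hp : p.Prime) (hodd : p ≠ 2)
    {O : Type*} [CommRing O] [IsDomain O] [IsDiscreteValuationRing O] [CharP O p]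
    (n : ℕ) (hn : 1 ≤ n) (α β : Oˣ) (μ : PowerSeries O)
    (hform : ∀ j : ℕ, ¬ p ^ n ∣ j → PowerSeries.coeff j μ = 0)
    (h0 : PowerSeries.constantCoeff μ = 0)
    (hlead : PowerSeries.coeff (p ^ n) μ =
      ((α ^ ((p ^ n - 1) / (p - 1)) : Oˣ) : O) * (β : O) ^ (p ^ n - 1)) :
    ∃ G : PowerSeries O,
      PowerSeries.constantCoeff G = 0 ∧
      PowerSeries.coeff 1 G *
        (((α ^ ((p ^ n - 1) / (p - 1)) : Oˣ) : O) * (β : O) ^ (p ^ n - 1)) = 1 ∧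
      pscomp (PowerSeries.mk fun j => PowerSeries.coeff (p ^ n * j) μ) G = PowerSeries.X ∧
      pscomp G μ = PowerSeries.X ^ (p ^ n) := by
  set q : ℕ := p ^ n with hqdef
  have hq : 0 < q := pow_pos hp.pos n
  set F : PowerSeries O := PowerSeries.mk fun j => PowerSeries.coeff (q * j) μ with hFdef
  set u : Oˣ := α ^ ((q - 1) / (p - 1)) * β ^ (q - 1) with hudef
  have huval : (u : O) = ((α ^ ((q - 1) / (p - 1)) : Oˣ) : O) * (β : O) ^ (q - 1) := by
    rw [hudef, Units.val_mul, Units.val_pow_eq_pow_val, Units.val_pow_eq_pow_val]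
  have hF0 : PowerSeries.constantCoeff F = 0 := by
    rw [← coeff_zero_eq_constantCoeff, hFdef, coeff_mk, mul_zero,
      coeff_zero_eq_constantCoeff, h0]
  have hF1 : PowerSeries.coeff 1 F = ↑u := by
    rw [hFdef, coeff_mk, mul_one, hlead, huval]
  obtain ⟨G, hG0, hG1, hFG, hGF⟩ := exists_inverse F u hF0 hF1
  have hrel : ∀ j, PowerSeries.coeff (q * j) μ = PowerSeries.coeff j F := by
    intro j; rw [hFdef, coeff_mk]
  refine ⟨G, hG0, ?_, hFG, ?_⟩
  · rw [hG1, ← huval, Units.inv_mul]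
  · ext m
    rw [PscompAux.coeff_pscomp G μ h0, coeff_X_pow]
    by_cases hdvd : q ∣ m
    · obtain ⟨j, rfl⟩ := hdvd
      have hsub : Finset.range (j + 1) ⊆ Finset.range (q * j + 1) :=
        Finset.range_subset_range.mpr (by have := Nat.mul_le_mul hq (le_refl j); omega)
      calc ∑ i ∈ Finset.range (q * j + 1),
            PowerSeries.coeff i G * PowerSeries.coeff (q * j) (μ ^ i)
          = ∑ i ∈ Finset.range (q * j + 1),
            PowerSeries.coeff i G * PowerSeries.coeff j (F ^ i) := by
            refine Finset.sum_congr rfl fun i _ => ?_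
            rw [(pow_support q hq μ F hform hrel i).2 j]
        _ = ∑ i ∈ Finset.range (j + 1),
            PowerSeries.coeff i G * PowerSeries.coeff j (F ^ i) := by
            refine (Finset.sum_subset hsub fun i _ hi => ?_).symm
            rw [PscompAux.coeff_pow_of_lt F hF0 (by simpa using hi), mul_zero]
        _ = PowerSeries.coeff j (pscomp G F) :=
            (PscompAux.coeff_pscomp G F hF0 j).symm
        _ = if q * j = q then 1 else 0 := by
            rw [hGF, coeff_X]
            by_cases hj : j = 1
            · rw [if_pos hj, if_pos (by rw [hj, mul_one])]
            · rw [if_neg hj, if_neg (fun h => hj (by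
                have : q * j = q * 1 := by omega
                exact Nat.eq_of_mul_eq_mul_left hq this))]
    · rw [if_neg (fun h => hdvd ⟨1, by omega⟩), Finset.sum_eq_zero fun i _ => ?_]
      rw [(pow_support q hq μ F hform hrel i).1 m hdvd, mul_zero]
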